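/- Let a : ℝ × ℝ → ℝ be Lipschitz with constant M (with respect to the sum of absolute values of the two coordinates, scaled by 1/2, i.e. |a(x₁,y₁) - a(x₂,y₂)| ≤ (M/2)(|x₁-x₂| + |y₁-y₂|)) and let κ : ℝ × ℝ → ℝ be Lipschitz with constant K in the same sense. For P ∈ ℕ and x ∈ ℝ^P define the vector field 𝐚(x)_i = a(x_i, (1/P) ∑_{j=1}^P κ(x_i, x_j)). Then for all x, y ∈ ℝ^P, (1/P) ∑_{i=1}^P |𝐚(x)_i − 𝐚(y)_i| ≤ ((M + MK)/2) · (1/P) ∑_{i=1}^P |x_i − y_i|; in particular the Lipschitz constant of 𝐚 with respect to the averaged ℓ¹ norm does not depend on P. -/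

import Mathlib

/-- P-uniform average Lipschitz bound for the interacting-particle drift. -/
theorem particle_drift_avg_lipschitz
    (a κ : ℝ × ℝ → ℝ) (M K : ℝ) (hM : 0 ≤ M) (hK : 0 ≤ K)
    (ha : ∀ x₁ y₁ x₂ y₂ : ℝ, |a (x₁, y₁) - a (x₂, y₂)| ≤ M / 2 * (|x₁ - x₂| + |y₁ - y₂|))
    (hκ : ∀ x₁ y₁ x₂ y₂ : ℝ, |κ (x₁, y₁) - κ (x₂, y₂)| ≤ K / 2 * (|x₁ - x₂| + |y₁ - y₂|))
    (P : ℕ) (hP : 0 < P) (x y : Fin P → ℝ) :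
    (1 / (P : ℝ)) * ∑ i, |a (x i, (1 / (P : ℝ)) * ∑ j, κ (x i, x j))
                        - a (y i, (1 / (P : ℝ)) * ∑ j, κ (y i, y j))|
      ≤ (M + M * K) / 2 * ((1 / (P : ℝ)) * ∑ i, |x i - y i|) := by
  have hPpos : (0:ℝ) < P := by exact_mod_cast hP
  set A : ℝ := (1 / (P : ℝ)) * ∑ i, |x i - y i| with hAdef
  have hSA : ∑ i, |x i - y i| = (P : ℝ) * A := by
    rw [hAdef]; field_simp
  have key : ∀ i : Fin P,
      |a (x i, (1 / (P : ℝ)) * ∑ j, κ (x i, x j))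
        - a (y i, (1 / (P : ℝ)) * ∑ j, κ (y i, y j))|
      ≤ M / 2 * |x i - y i| + M / 2 * (K / 2 * |x i - y i| + K / 2 * A) := by
    intro i
    have hS : |(1 / (P : ℝ)) * ∑ j, κ (x i, x j) - (1 / (P : ℝ)) * ∑ j, κ (y i, y j)|
        ≤ K / 2 * |x i - y i| + K / 2 * A := by
      rw [← mul_sub, ← Finset.sum_sub_distrib, abs_mul]
      have h1 : |∑ j, (κ (x i, x j) - κ (y i, y j))|
          ≤ ∑ j : Fin P, (K / 2 * (|x i - y i| + |x j - y j|)) := by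
        refine (Finset.abs_sum_le_sum_abs _ _).trans ?_
        exact Finset.sum_le_sum fun j _ => hκ _ _ _ _
      have h2 : ∑ j : Fin P, (K / 2 * (|x i - y i| + |x j - y j|))
          = (P : ℝ) * (K / 2 * |x i - y i|) + K / 2 * ((P : ℝ) * A) := by
        simp [Finset.mul_sum, mul_add, Finset.sum_add_distrib, ← hSA, ← Finset.mul_sum]
      have habs : |1 / (P : ℝ)| = 1 / (P : ℝ) := abs_of_pos (by positivity)
      rw [habs]
      calc (1 / (P : ℝ)) * |∑ j, (κ (x i, x j) - κ (y i, y j))|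
          ≤ (1 / (P : ℝ)) * ((P : ℝ) * (K / 2 * |x i - y i|) + K / 2 * ((P : ℝ) * A)) := by
            rw [← h2]; exact mul_le_mul_of_nonneg_left h1 (by positivity)
        _ = K / 2 * |x i - y i| + K / 2 * A := by field_simp
    calc |a (x i, (1 / (P : ℝ)) * ∑ j, κ (x i, x j))
            - a (y i, (1 / (P : ℝ)) * ∑ j, κ (y i, y j))|
        ≤ M / 2 * (|x i - y i|
            + |(1 / (P : ℝ)) * ∑ j, κ (x i, x j) - (1 / (P : ℝ)) * ∑ j, κ (y i, y j)|) :=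
          ha _ _ _ _
      _ ≤ M / 2 * |x i - y i| + M / 2 * (K / 2 * |x i - y i| + K / 2 * A) := by
          rw [mul_add]; gcongr
  have hsum : ∑ i, |a (x i, (1 / (P : ℝ)) * ∑ j, κ (x i, x j))
      - a (y i, (1 / (P : ℝ)) * ∑ j, κ (y i, y j))|
      ≤ ∑ i : Fin P, (M / 2 * |x i - y i| + M / 2 * (K / 2 * |x i - y i| + K / 2 * A)) :=
    Finset.sum_le_sum fun i _ => key i
  have hsum2 : ∑ i : Fin P, (M / 2 * |x i - y i| + M / 2 * (K / 2 * |x i - y i| + K / 2 * A))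
      = (M / 2 + M * K / 4) * ((P : ℝ) * A) + (P : ℝ) * (M / 2 * (K / 2 * A)) := by
    rw [Finset.sum_add_distrib, ← Finset.mul_sum, ← Finset.mul_sum, Finset.sum_add_distrib,
      ← Finset.mul_sum, Finset.sum_const, Finset.card_fin, hSA, nsmul_eq_mul]
    ring
  calc (1 / (P : ℝ)) * ∑ i, |a (x i, (1 / (P : ℝ)) * ∑ j, κ (x i, x j))
          - a (y i, (1 / (P : ℝ)) * ∑ j, κ (y i, y j))|
      ≤ (1 / (P : ℝ)) * ((M / 2 + M * K / 4) * ((P : ℝ) * A) + (P : ℝ) * (M / 2 * (K / 2 * A))) := by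
        rw [← hsum2]; exact mul_le_mul_of_nonneg_left hsum (by positivity)
    _ = (M + M * K) / 2 * A := by field_simp; ring
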